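/- arXiv:2008.08120 — 7 statements merged into one kernel-verified Lean document; each statement's English description precedes it below -/
import Mathlib

section
/- Let L be a loop and r ∈ L. Define p ∘_r q = (p·(q·r))/r. Then (L, ∘_r) is a loop with the same identity 1, with right quotient p/_r q = (p·r)/(q·r) and left quotient p\_r q = (p\(q·r))/r. -/
/-- A loop: a quasigroup with a two-sided identity element.
`rdiv p q` is the right quotient p / q and `ldiv p q` is the left quotient p \\ q. -/
structure LoopStr (L : Type*) where
  mul : L → L → L
  rdiv : L → L → L
  ldiv : L → L → L
  one : L
  rdiv_mul : ∀ p q, mul (rdiv p q) q = p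
  mul_ldiv : ∀ p q, mul q (ldiv q p) = p
  mul_rdiv : ∀ p q, rdiv (mul p q) q = p
  ldiv_mul : ∀ p q, ldiv p (mul p q) = q
  one_mul : ∀ q, mul one q = q
  mul_one : ∀ q, mul q one = q

/-- The modified product p ∘_r q = (p·(q·r))/r makes L a loop with the same
identity, with right quotient p/_r q = (p·r)/(q·r) and left quotient
p\\_r q = (p\\(q·r))/r. -/
theorem stmt9 {L : Type*} (Q : LoopStr L) (r : L) :
    ∃ Qr : LoopStr L,
      (∀ p q, Qr.mul p q = Q.rdiv (Q.mul p (Q.mul q r)) r) ∧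
      (∀ p q, Qr.rdiv p q = Q.rdiv (Q.mul p r) (Q.mul q r)) ∧
      (∀ p q, Qr.ldiv p q = Q.rdiv (Q.ldiv p (Q.mul q r)) r) ∧
      Qr.one = Q.one := by
  refine ⟨{
    mul := fun p q => Q.rdiv (Q.mul p (Q.mul q r)) r
    rdiv := fun p q => Q.rdiv (Q.mul p r) (Q.mul q r)
    ldiv := fun p q => Q.rdiv (Q.ldiv p (Q.mul q r)) r
    one := Q.one
    rdiv_mul := fun p q => by
      simp only [Q.rdiv_mul, Q.mul_rdiv]
    mul_ldiv := fun p q => by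
      simp only [Q.rdiv_mul, Q.mul_ldiv, Q.mul_rdiv]
    mul_rdiv := fun p q => by
      simp only [Q.rdiv_mul, Q.mul_rdiv]
    ldiv_mul := fun p q => by
      simp only [Q.rdiv_mul, Q.ldiv_mul, Q.mul_rdiv]
    one_mul := fun q => by
      simp only [Q.one_mul, Q.mul_rdiv]
    mul_one := fun q => by
      simp only [Q.one_mul, Q.mul_rdiv]
  }, fun _ _ => rfl, fun _ _ => rfl, fun _ _ => rfl, rfl⟩
end

section
/- Let L be a loop, (β,B) a right pseudoautomorphism pair with full action h(q) = β(q)·B, and r ∈ L. Then for all p,q ∈ L: β(p ∘_r q) = β(p) ∘_{h(r)} β(q), and moreover β is a right pseudoautomorphism of (L,∘_r) with companion h(r)/r, i.e. β(p ∘_r q) ∘_r (h(r)/r) = β(p) ∘_r (β(q) ∘_r (h(r)/r)). -/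
/-- If (β,B) is a right pseudoautomorphism pair with full action h(q)=β(q)·B,
then β(p ∘_r q) = β(p) ∘_{h(r)} β(q), and β is a right pseudoautomorphism of
(L,∘_r) with companion h(r)/r. -/
theorem stmt13 {L : Type*} (Q : LoopStr L) (β : L → L) (B : L)
    (hbij : Function.Bijective β)
    (hps : ∀ p q, Q.mul (β p) (Q.mul (β q) B) = Q.mul (β (Q.mul p q)) B) (r : L) :
    -- notation: mulS s p q = p ∘_s q, h q = β(q)·B, C = h(r)/r
    let mulS : L → L → L → L := fun s p q => Q.rdiv (Q.mul p (Q.mul q s)) s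
    let h : L → L := fun q => Q.mul (β q) B
    let C : L := Q.rdiv (h r) r
    (∀ p q, β (mulS r p q) = mulS (h r) (β p) (β q)) ∧
      (∀ p q, mulS r (β (mulS r p q)) C = mulS r (β p) (mulS r (β q) C)) := by
  intro mulS h C
  have claim1 : ∀ p q, β (mulS r p q) = mulS (h r) (β p) (β q) := by
    intro p q
    have hx : Q.mul (Q.rdiv (Q.mul p (Q.mul q r)) r) r = Q.mul p (Q.mul q r) :=
      Q.rdiv_mul _ _
    have key : Q.mul (β (Q.rdiv (Q.mul p (Q.mul q r)) r)) (Q.mul (β r) B)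
        = Q.mul (β p) (Q.mul (β q) (Q.mul (β r) B)) := by
      rw [hps, hx, ← hps, hps q r]
    simp only [mulS, h]
    rw [← Q.mul_rdiv (β (Q.rdiv (Q.mul p (Q.mul q r)) r)) (Q.mul (β r) B), key]
  refine ⟨claim1, ?_⟩
  intro p q
  have hc := claim1 p q
  simp only [mulS, h, C] at hc ⊢
  rw [Q.rdiv_mul, Q.rdiv_mul, hc, Q.rdiv_mul]
end

section
/- Let L be a loop, (β,B) a right pseudoautomorphism pair with full action h(q) = β(q)·B, and r ∈ L. Then for all p,q ∈ L: β(p /_r q) = β(p) /_{h(r)} β(q), where /_s denotes the right quotient of (L,∘_s). -/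
/-- If (β,B) is a right pseudoautomorphism pair with full action h(q)=β(q)·B,
then β(p /_r q) = β(p) /_{h(r)} β(q). -/
theorem stmt14 {L : Type*} (Q : LoopStr L) (β : L → L) (B : L)
    (hbij : Function.Bijective β)
    (hps : ∀ p q, Q.mul (β p) (Q.mul (β q) B) = Q.mul (β (Q.mul p q)) B) (r : L) :
    ∀ p q,
      β (Q.rdiv (Q.mul p r) (Q.mul q r)) =
        Q.rdiv (Q.mul (β p) (Q.mul (β r) B)) (Q.mul (β q) (Q.mul (β r) B)) := by
  intro p q
  set x := Q.rdiv (Q.mul p r) (Q.mul q r) with hx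
  have key : Q.mul (β p) (Q.mul (β r) B)
      = Q.mul (β x) (Q.mul (β q) (Q.mul (β r) B)) := by
    rw [hps q r, hps x (Q.mul q r), hx, Q.rdiv_mul, hps p r]
  rw [key, Q.mul_rdiv]
end

section
/- Let L be a loop, (α,A) a right pseudoautomorphism pair with full action h(q) = α(q)·A, and r ∈ L. Then for any B ∈ L: h(B)/r = β_r(B/r), where β_r is the map p ↦ α(p) ∘_r (h(r)/r). Equivalently, h(B)/r = α(B/r) ∘_r (h(r)/r). -/
/-- G-set isomorphism property: for a right pseudoautomorphism pair (α,A)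
with full action h(q)=α(q)·A and any r, B ∈ L:
h(B)/r = α(B/r) ∘_r (h(r)/r). -/
theorem stmt15 {L : Type*} (Q : LoopStr L) (α : L → L) (A : L)
    (hbij : Function.Bijective α)
    (hps : ∀ p q, Q.mul (α p) (Q.mul (α q) A) = Q.mul (α (Q.mul p q)) A) (r : L) :
    ∀ B,
      Q.rdiv (Q.mul (α B) A) r =
        Q.rdiv (Q.mul (α (Q.rdiv B r))
          (Q.mul (Q.rdiv (Q.mul (α r) A) r) r)) r := by
  intro B
  rw [Q.rdiv_mul, hps, Q.rdiv_mul]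
end

section
/- Let L be a loop, r ∈ L, and C ∈ L. If C = (r·A)/r for some A in the right nucleus N^R(L), then C lies in the right nucleus of (L,∘_r): (p ∘_r q) ∘_r C = p ∘_r (q ∘_r C) for all p,q ∈ L. -/
/-- If A is in the right nucleus of L and C = (r·A)/r, then C is in the right
nucleus of (L,∘_r): (p ∘_r q) ∘_r C = p ∘_r (q ∘_r C). -/
theorem stmt16 {L : Type*} (Q : LoopStr L) (r A : L)
    (hA : ∀ p q, Q.mul (Q.mul p q) A = Q.mul p (Q.mul q A)) :
    let mulr : L → L → L := fun p q => Q.rdiv (Q.mul p (Q.mul q r)) r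
    let C : L := Q.rdiv (Q.mul r A) r
    ∀ p q, mulr (mulr p q) C = mulr p (mulr q C) := by
  intro mulr C p q
  simp only [mulr, C, Q.rdiv_mul, ← hA, Q.rdiv_mul]
end

section
/- Let L be a Moufang loop. Then for every q ∈ L, the map Ad_q: p ↦ q·p·q^{-1} is a right pseudoautomorphism of L with companion q³, i.e. (q·(xy)·q^{-1})·q³ = (q·x·q^{-1})·((q·y·q^{-1})·q³) for all x,y ∈ L. -/
/-- In a Moufang loop (a loop satisfying the left and right Bol identities),
for every q the map Ad_q : p ↦ (q·p)·q⁻¹ is a right pseudoautomorphism with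
companion q³:  ((q·(x·y))·q⁻¹)·q³ = ((q·x)·q⁻¹)·(((q·y)·q⁻¹)·q³). -/
theorem stmt17 {L : Type*} (Q : LoopStr L)
    (leftBol : ∀ p q r, Q.mul p (Q.mul q (Q.mul p r)) = Q.mul (Q.mul p (Q.mul q p)) r)
    (rightBol : ∀ p q r, Q.mul (Q.mul (Q.mul p q) r) q = Q.mul p (Q.mul (Q.mul q r) q))
    (q : L) :
    let qinv : L := Q.ldiv q Q.one
    let qcube : L := Q.mul (Q.mul q q) q
    ∀ x y,
      Q.mul (Q.mul (Q.mul q (Q.mul x y)) qinv) qcube =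
        Q.mul (Q.mul (Q.mul q x) qinv)
          (Q.mul (Q.mul (Q.mul q y) qinv) qcube) := by
  intro qinv qcube x y
  set m := Q.mul with hm
  -- injectivity of right and left translations
  have om : ∀ a, m Q.one a = a := Q.one_mul
  have mo : ∀ a, m a Q.one = a := Q.mul_one
  have Rinj : ∀ c a b, m a c = m b c → a = b := fun c a b h => by
    have := congrArg (fun z => Q.rdiv z c) h
    simpa only [hm, Q.mul_rdiv] using this
  have Linj : ∀ c a b, m c a = m c b → a = b := fun c a b h => by
    have := congrArg (fun z => Q.ldiv c z) h
    simpa only [hm, Q.ldiv_mul] using this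
  have hq1 : m q qinv = Q.one := Q.mul_ldiv Q.one q
  -- right inverse property: (p·q)·q⁻¹ = p
  have RIP : ∀ p, m (m p q) qinv = p := by
    intro p
    apply Rinj q
    have := rightBol p q qinv
    rw [hq1] at this
    rw [this, om]
  -- (a·q⁻¹)·q = a
  have RIP' : ∀ a, m (m a qinv) q = a := by
    intro a
    apply Rinj qinv
    exact RIP (m a qinv)
  -- L_q ∘ L_qinv = id and L_qinv ∘ L_q = id
  have LIP : ∀ r, m qinv (m q r) = r := by
    intro r
    apply Linj q
    have h2 : m qinv q = Q.one := by
      have := RIP' Q.one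
      rwa [om] at this
    have := leftBol q qinv r
    rw [h2, mo] at this
    exact this
  have LIP' : ∀ r, m q (m qinv r) = r := by
    intro r
    apply Linj qinv
    exact LIP (m qinv r)
  have h2 : m qinv q = Q.one := by
    have := RIP' Q.one
    rwa [om] at this
  -- flexibility: q·(r·q) = (q·r)·q
  have flex : ∀ r, m q (m r q) = m (m q r) q := by
    intro r
    have h3 := rightBol qinv q r
    rw [h2, om] at h3
    -- h3 : m r q = m qinv (m (m q r) q)
    calc m q (m r q) = m q (m qinv (m (m q r) q)) := by rw [← h3]
      _ = m (m q r) q := LIP' _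
  -- left Moufang: ((q·x)·q)·s = q·(x·(q·s))
  have leftM : ∀ a s, m (m (m q a) q) s = m q (m a (m q s)) := by
    intro a s
    have := leftBol q a s
    rw [flex a] at this
    exact this.symm
  -- middle Moufang: (q·a)·(b·q) = (q·(a·b))·q
  have middle : ∀ a b, m (m q a) (m b q) = m (m q (m a b)) q := by
    intro a b
    have hr : m q (Q.ldiv q b) = b := Q.mul_ldiv b q
    calc m (m q a) (m b q)
        = m (m q a) (m (m q (Q.ldiv q b)) q) := by rw [hr]
      _ = m (m (m (m q a) q) (Q.ldiv q b)) q := (rightBol (m q a) q (Q.ldiv q b)).symm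
      _ = m (m q (m a (m q (Q.ldiv q b)))) q := by rw [leftM]
      _ = m (m q (m a b)) q := by rw [hr]
  -- key lemma: (a·q⁻¹)·q³ = (a·q)·q
  have lemA : ∀ a, m (m a qinv) qcube = m (m a q) q := by
    intro a
    have := rightBol (m a qinv) q q
    rw [RIP' a] at this
    exact this.symm
  -- assemble
  calc m (m (m q (m x y)) qinv) qcube
      = m (m (m q (m x y)) q) q := lemA _
    _ = m (m (m q x) (m y q)) q := by rw [← middle]
    _ = m (m (m (m (m q x) qinv) q) (m y q)) q := by rw [RIP']
    _ = m (m (m q x) qinv) (m (m q (m y q)) q) := rightBol _ q (m y q)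
    _ = m (m (m q x) qinv) (m (m (m q y) q) q) := by rw [flex]
    _ = m (m (m q x) qinv) (m (m (m q y) qinv) qcube) := by rw [← lemA]
end

section
/- Let L be a loop and h = (α,A) a right pseudoautomorphism pair with full action h(q) = α(q)·A. For any s ∈ L and C in the right nucleus N^R(L), define h''(C) = A\(h(C)). Then h(s·C) = h(s)·h''(C). -/
/-- For a right pseudoautomorphism pair (α,A) with full action h(q)=α(q)·A,
any s ∈ L and C in the right nucleus, with h''(C) = A\\h(C):
h(s·C) = h(s)·h''(C). -/
theorem stmt19 {L : Type*} (Q : LoopStr L) (α : L → L) (A : L)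
    (hbij : Function.Bijective α)
    (hps : ∀ p q, Q.mul (α p) (Q.mul (α q) A) = Q.mul (α (Q.mul p q)) A)
    (s C : L)
    (hC : ∀ p q, Q.mul (Q.mul p q) C = Q.mul p (Q.mul q C)) :
    let h : L → L := fun q => Q.mul (α q) A
    h (Q.mul s C) = Q.mul (h s) (Q.ldiv A (h C)) := by
  intro h
  -- φ := h is injective
  have hφinj : Function.Injective h := by
    intro x y hxy
    have h2 : Q.rdiv (Q.mul (α x) A) A = Q.rdiv (Q.mul (α y) A) A :=
      congrArg (fun t => Q.rdiv t A) hxy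
    rw [Q.mul_rdiv, Q.mul_rdiv] at h2
    exact hbij.1 h2
  -- α(1)·A = A, i.e. h 1 = A
  have h1 : h Q.one = A := by
    have e1 : Q.mul (α Q.one) (Q.mul (α Q.one) A) = Q.mul (α Q.one) A := by
      have := hps Q.one Q.one
      rwa [Q.one_mul] at this
    have := congrArg (Q.ldiv (α Q.one)) e1
    rwa [Q.ldiv_mul, Q.ldiv_mul] at this
  -- choose a with α a = A
  obtain ⟨a, ha⟩ := hbij.2 A
  -- choose e with h e = 1
  obtain ⟨z, hz⟩ := hbij.2 (Q.rdiv Q.one A)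
  have he : h z = Q.one := by
    show Q.mul (α z) A = Q.one
    rw [hz, Q.rdiv_mul]
  -- a * e = 1
  have hae : Q.mul a z = Q.one := by
    apply hφinj
    show Q.mul (α (Q.mul a z)) A = Q.mul (α Q.one) A
    rw [← hps a z]
    show Q.mul (α a) (h z) = h Q.one
    rw [he, h1, Q.mul_one, ha]
  -- key: A * h(z*C) = h C
  have key : Q.mul A (h (Q.mul z C)) = h C := by
    have step : Q.mul (α a) (Q.mul (α (Q.mul z C)) A) = Q.mul (α C) A := by
      rw [hps a (Q.mul z C), ← hC a z, hae, Q.one_mul]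
    calc Q.mul A (h (Q.mul z C)) = Q.mul (α a) (Q.mul (α (Q.mul z C)) A) := by rw [ha]
      _ = Q.mul (α C) A := step
      _ = h C := rfl
  -- hence A \ h C = h (z*C)
  have hld : Q.ldiv A (h C) = h (Q.mul z C) := by
    rw [← key, Q.ldiv_mul]
  -- choose w with α w = h s
  obtain ⟨w, hw⟩ := hbij.2 (h s)
  have hws : Q.mul w z = s := by
    apply hφinj
    show Q.mul (α (Q.mul w z)) A = h s
    rw [← hps w z]
    show Q.mul (α w) (h z) = h s
    rw [he, hw, Q.mul_one]
  -- finish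
  rw [hld, ← hw]
  show h (Q.mul s C) = Q.mul (α w) (Q.mul (α (Q.mul z C)) A)
  rw [hps w (Q.mul z C)]
  show h (Q.mul s C) = Q.mul (α (Q.mul w (Q.mul z C))) A
  rw [← hC w z, hws]
end
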